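/- Let (X,δ) be a nonempty metric space carrying a uniformly bounded Borel measure μ which satisfies the volume doubling property: there is a constant A ≥ 1 with μ(B(x,2r)) ≤ A·μ(B(x,r)) for all x ∈ X and r > 0. Then d∞(X) ≤ log₂ A; in particular X has finite asymptotic dimension. -/

import Mathlib

open Metric Filter Topology Set
open scoped ENNReal NNReal

/-- Logarithm of an extended natural number, valued in `EReal` (`⊤` for `⊤`). -/
noncomputable def elog (n : ℕ∞) : EReal :=
  if n = ⊤ then ⊤ else ((Real.log (n.toNat : ℝ) : ℝ) : EReal)

/-- `coverNum r Ω` : the least number of open balls of radius `r` needed to cover `Ω`,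
valued in `ℕ∞` (it is `⊤` if no finite cover exists). -/
noncomputable def coverNum {X : Type*} [MetricSpace X] (r : ℝ) (Ω : Set X) : ℕ∞ :=
  sInf ((fun s : Finset X => (s.card : ℕ∞)) ''
    {s : Finset X | Ω ⊆ ⋃ x ∈ s, Metric.ball x r})

/-- The asymptotic dimension with base point `x`:
`d∞(X) = lim_{r→∞} limsup_{R→∞} log n_r(B(x,R)) / log R`; the limit in `r` exists since the
inner expression is nonincreasing in `r`, hence equals the infimum over `r > 0`. -/
noncomputable def asympDim {X : Type*} [MetricSpace X] (x : X) : EReal :=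
  ⨅ (r : ℝ) (_ : 0 < r),
    Filter.limsup (fun R : ℝ => ((Real.log R)⁻¹ : EReal) * elog (coverNum r (Metric.ball x R)))
      Filter.atTop

/-- The asymptotic dimension of a metric space (independent of the base point). -/
noncomputable def asympDimSpace (X : Type*) [MetricSpace X] : EReal :=
  ⨆ x : X, asympDim x

/-- A uniformly bounded Borel measure: for every `r > 0` the volumes of balls of radius `r`
are bounded away from `0` and from `∞`, uniformly in the centre. -/
def UnifBounded {X : Type*} [MetricSpace X] [MeasurableSpace X]
    (μ : MeasureTheory.Measure X) : Prop :=
  ∀ r : ℝ, 0 < r →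
    (0 < ⨅ x : X, μ (Metric.ball x r)) ∧ (⨆ x : X, μ (Metric.ball x r)) < ⊤

/-- If a uniformly bounded Borel measure on `X` satisfies the volume doubling property
`μ(B(x,2r)) ≤ A μ(B(x,r))`, then `d∞(X) ≤ log₂ A`; in particular `X` has finite
asymptotic dimension. -/
theorem stmt17 {X : Type*} [MetricSpace X] [MeasurableSpace X] [BorelSpace X] [Nonempty X]
    (μ : MeasureTheory.Measure X) (hμ : UnifBounded μ) (A : ℝ) (hA : 1 ≤ A)
    (hdouble : ∀ (x : X) (r : ℝ), 0 < r →
      μ (Metric.ball x (2 * r)) ≤ ENNReal.ofReal A * μ (Metric.ball x r)) :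
    asympDimSpace X ≤ ((Real.log A / Real.log 2 : ℝ) : EReal) ∧
    asympDimSpace X < ⊤ := by
  classical
  have hA0 : (0:ℝ) < A := lt_of_lt_of_le one_pos hA
  have hlogA : 0 ≤ Real.log A := Real.log_nonneg hA
  set L : ℝ := Real.log A / Real.log 2 with hL
  obtain ⟨hc0, hchalf_top⟩ := hμ (1/2) (by norm_num)
  obtain ⟨-, hC⟩ := hμ 1 one_pos
  set c : ℝ≥0∞ := ⨅ y : X, μ (Metric.ball y (1/2)) with hcdef
  set C : ℝ≥0∞ := ⨆ y : X, μ (Metric.ball y 1) with hCdef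
  obtain ⟨x₀⟩ := ‹Nonempty X›
  have hcC : c ≤ C :=
    le_trans (iInf_le _ x₀)
      (le_trans (MeasureTheory.measure_mono (ball_subset_ball (by norm_num)))
        (le_iSup (fun y => μ (Metric.ball y 1)) x₀))
  have hctop : c ≠ ⊤ := (lt_of_le_of_lt hcC hC).ne
  have hcne : c ≠ 0 := hc0.ne'
  have hCne : C ≠ ⊤ := hC.ne
  set creal : ℝ := c.toReal with hcreal_def
  set Creal : ℝ := C.toReal with hCreal_def
  have hcreal : 0 < creal := ENNReal.toReal_pos hcne hctop
  have hCc : creal ≤ Creal := ENNReal.toReal_mono hCne hcC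
  set D : ℝ := Real.log (Creal / creal) with hD
  have hD0 : 0 ≤ D := Real.log_nonneg ((one_le_div hcreal).2 hCc)
  set A' : ℝ≥0∞ := ENNReal.ofReal A with hA'
  have hA'top : A' ≠ ⊤ := ENNReal.ofReal_ne_top
  -- iterated doubling
  have hiter : ∀ (x : X) (k : ℕ) (r : ℝ), 0 < r →
      μ (Metric.ball x ((2:ℝ)^k * r)) ≤ A'^k * μ (Metric.ball x r) := by
    intro x k
    induction k with
    | zero => intro r hr; simp
    | succ k ih =>
      intro r hr
      have h1 : (2:ℝ)^(k+1) * r = (2:ℝ)^k * (2 * r) := by ring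
      calc μ (Metric.ball x ((2:ℝ)^(k+1) * r))
          = μ (Metric.ball x ((2:ℝ)^k * (2*r))) := by rw [h1]
        _ ≤ A'^k * μ (Metric.ball x (2*r)) := ih (2*r) (by linarith)
        _ ≤ A'^k * (A' * μ (Metric.ball x r)) := mul_le_mul_right (hdouble x r hr) _
        _ = A'^(k+1) * μ (Metric.ball x r) := by ring
  set h : ℝ → ℝ :=
    fun R => (Real.log R)⁻¹ * ((Real.logb 2 (R+1) + 1) * Real.log A + D) with hh
  -- the key pointwise bound
  have key : ∀ (x : X) (R : ℝ), 2 ≤ R →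
      ((Real.log R)⁻¹ : EReal) * elog (coverNum 1 (Metric.ball x R)) ≤ ((h R : ℝ) : EReal) := by
    intro x R hR
    have hR1 : (1:ℝ) ≤ R + 1 := by linarith
    have hR0 : (0:ℝ) < R + 1 := by linarith
    set k : ℕ := ⌈Real.logb 2 (R+1)⌉₊ with hk
    have h2k : R + 1 ≤ (2:ℝ)^k := by
      have h1 : (2:ℝ) ^ (Real.logb 2 (R+1)) = R + 1 :=
        Real.rpow_logb (by norm_num) (by norm_num) hR0
      have h2 : (2:ℝ) ^ (Real.logb 2 (R+1)) ≤ (2:ℝ) ^ ((k:ℝ)) :=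
        Real.rpow_le_rpow_of_exponent_le (by norm_num) (Nat.le_ceil _)
      rw [Real.rpow_natCast] at h2
      linarith [h1 ▸ h2]
    set r0 : ℝ := (R+1) / (2:ℝ)^k with hr0def
    have h2kpos : (0:ℝ) < (2:ℝ)^k := by positivity
    have hr0 : 0 < r0 := div_pos hR0 h2kpos
    have hr01 : r0 ≤ 1 := (div_le_one h2kpos).2 h2k
    have hballR1 : μ (Metric.ball x (R+1)) ≤ A'^k * C := by
      have he : (2:ℝ)^k * r0 = R + 1 := by
        rw [hr0def]; field_simp
      calc μ (Metric.ball x (R+1)) = μ (Metric.ball x ((2:ℝ)^k * r0)) := by rw [he]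
        _ ≤ A'^k * μ (Metric.ball x r0) := hiter x k r0 hr0
        _ ≤ A'^k * μ (Metric.ball x 1) :=
            mul_le_mul_right (MeasureTheory.measure_mono (ball_subset_ball hr01)) _
        _ ≤ A'^k * C := mul_le_mul_right (le_iSup (fun y => μ (Metric.ball y 1)) x) _
    set q : ℝ≥0∞ := A'^k * C / c with hq
    have hqtop : q ≠ ⊤ :=
      (ENNReal.div_lt_top (ENNReal.mul_ne_top (ENNReal.pow_ne_top hA'top) hCne) hcne).ne
    have cardBound : ∀ s : Finset X, ↑s ⊆ Metric.ball x R →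
        ((s : Set X).Pairwise fun y z => 1 ≤ dist y z) → (s.card : ℝ≥0∞) ≤ q := by
      intro s hs hsep
      have hdisj : (↑s : Set X).PairwiseDisjoint (fun y => Metric.ball y (1/2)) := by
        intro a ha b hb hab
        exact ball_disjoint_ball (by have := hsep ha hb hab; linarith)
      have hmeas := MeasureTheory.measure_biUnion_finset (μ := μ) hdisj (fun b _ => measurableSet_ball)
      have hsub : (⋃ b ∈ s, Metric.ball b (1/2)) ⊆ Metric.ball x (R+1) := by
        intro z hz
        simp only [mem_iUnion, exists_prop] at hz
        obtain ⟨b, hbs, hzb⟩ := hz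
        have h1 : dist b x < R := mem_ball.1 (hs hbs)
        have h2 : dist z b < 1/2 := mem_ball.1 hzb
        exact mem_ball.2 (lt_of_le_of_lt (dist_triangle z b x) (by linarith))
      have hsum : (s.card : ℝ≥0∞) * c ≤ μ (Metric.ball x (R+1)) := by
        calc (s.card : ℝ≥0∞) * c = ∑ b ∈ s, c := by
              rw [Finset.sum_const, nsmul_eq_mul]
          _ ≤ ∑ b ∈ s, μ (Metric.ball b (1/2)) :=
              Finset.sum_le_sum (fun b _ => iInf_le (fun y => μ (Metric.ball y (1/2))) b)
          _ = μ (⋃ b ∈ s, Metric.ball b (1/2)) := hmeas.symm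
          _ ≤ μ (Metric.ball x (R+1)) := MeasureTheory.measure_mono hsub
      have hfin := le_trans hsum hballR1
      rw [hq]
      exact (ENNReal.le_div_iff_mul_le (Or.inl hcne) (Or.inl hctop)).2 hfin
    set M : ℕ := ⌊q.toReal⌋₊ with hM
    have cardBoundNat : ∀ s : Finset X, ↑s ⊆ Metric.ball x R →
        ((s : Set X).Pairwise fun y z => 1 ≤ dist y z) → s.card ≤ M := by
      intro s hs hsep
      refine Nat.le_floor ?_
      have h1 := ENNReal.toReal_mono hqtop (cardBound s hs hsep)
      simpa using h1
    set P : Set (Finset X) :=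
      {s | ↑s ⊆ Metric.ball x R ∧ ((s : Set X).Pairwise fun y z => 1 ≤ dist y z)} with hP
    have hPne : (Finset.card '' P).Nonempty := ⟨0, ∅, ⟨by simp, by simp⟩, rfl⟩
    have hPbdd : BddAbove (Finset.card '' P) := by
      refine ⟨M, ?_⟩
      rintro n ⟨s, hsP, rfl⟩
      exact cardBoundNat s hsP.1 hsP.2
    obtain ⟨s, hsP, hscard⟩ := Nat.sSup_mem hPne hPbdd
    have hcover : Metric.ball x R ⊆ ⋃ y ∈ s, Metric.ball y 1 := by
      intro z hz
      by_contra hzn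
      simp only [mem_iUnion, exists_prop, not_exists, not_and, Metric.mem_ball, not_lt] at hzn
      have hzs : z ∉ s := by
        intro hzs
        have := hzn z hzs
        rw [dist_self] at this
        linarith
      have hins : (insert z s : Finset X) ∈ P := by
        constructor
        · rw [Finset.coe_insert]
          exact Set.insert_subset hz hsP.1
        · rw [Finset.coe_insert]
          refine Set.Pairwise.insert hsP.2 ?_
          intro y hy hne
          refine ⟨?_, ?_⟩
          · exact hzn y hy
          · rw [dist_comm]; exact hzn y hy
      have hle : (insert z s).card ≤ sSup (Finset.card '' P) :=
        le_csSup hPbdd ⟨_, hins, rfl⟩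
      rw [Finset.card_insert_of_notMem hzs] at hle
      omega
    have hcovN : coverNum 1 (Metric.ball x R) ≤ (s.card : ℕ∞) := sInf_le ⟨s, hcover, rfl⟩
    obtain ⟨m, hm, hmle⟩ := WithTop.le_coe_iff.mp hcovN
    have hmq : (m:ℝ) ≤ q.toReal := by
      have h1 : ((m:ℕ):ℝ≥0∞) ≤ q :=
        le_trans (by exact_mod_cast hmle) (cardBound s hsP.1 hsP.2)
      have h2 := ENNReal.toReal_mono hqtop h1
      simpa using h2
    have hqr : q.toReal = A^k * (Creal / creal) := by
      rw [hq, ENNReal.toReal_div, ENNReal.toReal_mul, ENNReal.toReal_pow,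
        ENNReal.toReal_ofReal hA0.le, mul_div_assoc, hcreal_def, hCreal_def]
    have hq1 : (1:ℝ) ≤ q.toReal := by
      rw [hqr]
      have h1 : (1:ℝ) ≤ A^k := one_le_pow₀ hA
      have h2 : (1:ℝ) ≤ Creal / creal := (one_le_div hcreal).2 hCc
      nlinarith
    have hlogm : Real.log m ≤ (k:ℝ) * Real.log A + D := by
      have h1 : Real.log m ≤ Real.log q.toReal := by
        rcases Nat.eq_zero_or_pos m with hm0 | hm0
        · simp only [hm0, Nat.cast_zero, Real.log_zero]
          exact Real.log_nonneg hq1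
        · exact Real.log_le_log (by exact_mod_cast hm0) hmq
      rw [hqr, Real.log_mul (pow_ne_zero _ hA0.ne') (div_pos (lt_of_lt_of_le hcreal hCc) hcreal).ne', Real.log_pow] at h1
      rw [hD]
      exact h1
    have hkle : (k:ℝ) ≤ Real.logb 2 (R+1) + 1 :=
      (Nat.ceil_lt_add_one (Real.logb_nonneg one_lt_two hR1)).le
    have hfinal : Real.log m ≤ (Real.logb 2 (R+1) + 1) * Real.log A + D := by
      refine le_trans hlogm ?_
      have := mul_le_mul_of_nonneg_right hkle hlogA
      linarith
    have hlogR : (0:ℝ) < Real.log R := Real.log_pos (by linarith)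
    have helog : elog (coverNum 1 (Metric.ball x R)) = ((Real.log m : ℝ) : EReal) := by
      rw [hm]
      unfold elog
      rw [if_neg (by exact WithTop.coe_ne_top)]
      rfl
    rw [helog]
    have hmul : ((Real.log R)⁻¹ : EReal) * ((Real.log m : ℝ) : EReal)
        = (((Real.log R)⁻¹ * Real.log m : ℝ) : EReal) := (EReal.coe_mul _ _).symm
    rw [hmul]
    refine EReal.coe_le_coe_iff.2 ?_
    rw [hh]
    exact mul_le_mul_of_nonneg_left hfinal (inv_nonneg.2 hlogR.le)
  -- limits
  have t1 : Tendsto (fun R : ℝ => (Real.log R)⁻¹) atTop (𝓝 0) :=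
    tendsto_inv_atTop_zero.comp Real.tendsto_log_atTop
  have t2 : Tendsto (fun R : ℝ => Real.log (R+1) * (Real.log R)⁻¹) atTop (𝓝 1) := by
    have base : Tendsto
        (fun R : ℝ => (Real.log (R+1) - Real.log R) * (Real.log R)⁻¹ + 1)
        atTop (𝓝 (0 * 0 + 1)) :=
      ((Real.tendsto_log_comp_add_sub_log 1).mul t1).add tendsto_const_nhds
    rw [zero_mul, zero_add] at base
    refine Tendsto.congr' ?_ base
    filter_upwards [eventually_ge_atTop (2:ℝ)] with R hR
    have hlogR : Real.log R ≠ 0 := (Real.log_pos (by linarith)).ne'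
    field_simp
    ring
  have htendh : Tendsto h atTop (𝓝 L) := by
    have expand : ∀ R : ℝ, h R
        = L * (Real.log (R+1) * (Real.log R)⁻¹) + (Real.log A + D) * (Real.log R)⁻¹ := by
      intro R
      have hlog2 : Real.log 2 ≠ 0 := (Real.log_pos one_lt_two).ne'
      have inner : (Real.logb 2 (R+1) + 1) * Real.log A + D
          = L * Real.log (R+1) + (Real.log A + D) := by
        rw [hL]
        simp only [Real.logb]
        field_simp
        ring
      rw [hh]
      dsimp only
      rw [inner]
      ring
    have base : Tendsto
        (fun R : ℝ => L * (Real.log (R+1) * (Real.log R)⁻¹) + (Real.log A + D) * (Real.log R)⁻¹)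
        atTop (𝓝 (L * 1 + (Real.log A + D) * 0)) :=
      (tendsto_const_nhds.mul t2).add (tendsto_const_nhds.mul t1)
    rw [mul_one, mul_zero, add_zero] at base
    exact base.congr (fun R => (expand R).symm)
  have hlimsup : ∀ x : X,
      Filter.limsup (fun R : ℝ => ((Real.log R)⁻¹ : EReal) * elog (coverNum 1 (Metric.ball x R)))
        Filter.atTop ≤ (L : EReal) := by
    intro x
    have hev : ∀ᶠ R in atTop,
        ((Real.log R)⁻¹ : EReal) * elog (coverNum 1 (Metric.ball x R)) ≤ ((h R : ℝ) : EReal) :=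
      eventually_atTop.2 ⟨2, key x⟩
    calc Filter.limsup (fun R : ℝ =>
          ((Real.log R)⁻¹ : EReal) * elog (coverNum 1 (Metric.ball x R))) Filter.atTop
        ≤ Filter.limsup (fun R : ℝ => ((h R : ℝ) : EReal)) Filter.atTop := limsup_le_limsup hev
      _ = (L : EReal) := (EReal.tendsto_coe.2 htendh).limsup_eq
  have main : asympDimSpace X ≤ (L : EReal) := by
    refine iSup_le fun x => ?_
    refine le_trans ?_ (hlimsup x)
    exact iInf₂_le 1 one_pos
  exact ⟨main, lt_of_le_of_lt main (EReal.coe_lt_top L)⟩
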